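/- If the only element of the quotient subspace M comparable with 0 is 0 itself (i.e., C ∩ M = {0} and (−C) ∩ M = {0}), then: (i) M is an order ideal; (ii) the quotient positive cone [C] is proper ([C] ∩ (−[C]) = {[0]}); and (iii) the quotient partial order is antisymmetric. -/

import Mathlib

/-- If the only element of the subspace `M` comparable with `0` is `0` itself
(`C ∩ M = {0}` and `(−C) ∩ M = {0}`), then: (i) `M` is an order ideal;
(ii) the quotient positive cone is proper; and (iii) the quotient partial
order, defined by `[g] ≤ [f]` iff `g ≤ f + h` for some `h ∈ M`,
is antisymmetric. -/
theorem quotient_order_antisymmetric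
    (V : Type*) [NormedAddCommGroup V] [PartialOrder V]
    [CovariantClass V V (· + ·) (· ≤ ·)] [Module ℝ V]
    (M : Submodule ℝ V) (hMclosed : IsClosed (M : Set V))
    (hpos : ∀ h : V, h ∈ M → 0 ≤ h → h = 0)
    (hneg : ∀ h : V, h ∈ M → h ≤ 0 → h = 0) :
    let τ : V → V ⧸ M := M.mkQ
    -- the quotient order
    let QLE : V ⧸ M → V ⧸ M → Prop :=
      fun ξ ζ => ∃ g f : V, τ g = ξ ∧ τ f = ζ ∧ ∃ h ∈ M, g ≤ f + h
    -- (i) M is an order ideal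
    (∀ a b c : V, a ∈ M → b ∈ M → a ≤ c → c ≤ b → c ∈ M) ∧
    -- (ii) the quotient positive cone is proper
    (∀ ξ : V ⧸ M, QLE (τ 0) ξ → QLE ξ (τ 0) → ξ = τ 0) ∧
    -- (iii) the quotient order is antisymmetric
    (∀ ξ ζ : V ⧸ M, QLE ξ ζ → QLE ζ ξ → ξ = ζ) := by
  intro τ QLE
  have key : ∀ ξ ζ : V ⧸ M, QLE ξ ζ → QLE ζ ξ → ξ = ζ := by
    rintro ξ ζ ⟨g, f, rfl, rfl, h, hhM, hgf⟩ ⟨g', f', hg', hf', h', hh'M, hg'f'⟩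
    have h1 : g' - f ∈ M := (Submodule.Quotient.eq M).mp hg'
    have h2 : f' - g ∈ M := (Submodule.Quotient.eq M).mp hf'
    set m : V := (f' - g) + h' - (g' - f) with hm
    have hmM : m ∈ M := M.sub_mem (M.add_mem h2 hh'M) h1
    have hfm : f ≤ g + m := by
      have : g' + (f - g') ≤ f' + h' + (f - g') := add_le_add_left hg'f' _
      calc f = g' + (f - g') := by abel
        _ ≤ f' + h' + (f - g') := this
        _ = g + m := by rw [hm]; abel
    have hzero : m + h = 0 := by
      apply hpos _ (M.add_mem hmM hhM)
      have : g ≤ g + m + h := le_trans hgf (add_le_add_left hfm h)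
      have := sub_nonneg.mpr this
      simpa [add_assoc, add_sub_cancel_left] using this
    have hfg : f + h ≤ g := by
      have : f + h ≤ g + m + h := add_le_add_left hfm h
      calc f + h ≤ g + m + h := this
        _ = g + (m + h) := by abel
        _ = g := by rw [hzero, add_zero]
    have hgeq : g = f + h := le_antisymm hgf hfg
    refine (Submodule.Quotient.eq M).mpr ?_
    have : g - f = h := by rw [hgeq]; abel
    rw [this]; exact hhM
  refine ⟨?_, fun ξ h1 h2 => key _ _ h2 h1, key⟩
  intro a b c haM hbM hac hcb
  have h1 : QLE (τ 0) (τ c) := ⟨a, c, by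
    simp [τ, Submodule.Quotient.eq, haM], rfl, 0, M.zero_mem, by simpa using hac⟩
  have h2 : QLE (τ c) (τ 0) := ⟨c, b, rfl, by
    simp [τ, Submodule.Quotient.eq, hbM], 0, M.zero_mem, by simpa using hcb⟩
  have := key _ _ h2 h1
  simpa [τ, Submodule.Quotient.eq] using this
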